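/- Expected one-step infection count for the SI DTS map: let h > 0 and let A be a random edge-timer vector whose components (A(e))_{e∈E(G)} are independent exponential rate-1 random variables. Then for every state x, E[‖g(x,A) − x‖₁] = ∑_{j∈V} (1 − exp(−h·n(j,x))). -/

import Mathlib

open MeasureTheory ProbabilityTheory Real

/-- View a Boolean infection state as a real number (`true ↦ 1`, `false ↦ 0`). -/
def boolToR (b : Bool) : ℝ := if b then 1 else 0

open Classical in
/-- One step of the SI discrete-time simulation (DTS): node `j` is infected afterwards iff
it was infected, or some infected neighbor's edge timer fires within time `h`. -/
noncomputable def siDTS {V : Type*} (G : SimpleGraph V) (h : ℝ) (x : V → Bool)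
    (a : G.edgeSet → ℝ) : V → Bool := fun j =>
  if x j = true ∨ ∃ j', ∃ hadj : G.Adj j j',
      x j' = true ∧ a ⟨s(j, j'), (SimpleGraph.mem_edgeSet G).mpr hadj⟩ ≤ h
  then true else false

/-- `n(j,x)`: the number of infected neighbors of `j` if `j` is susceptible, and `0` else. -/
noncomputable def numInfNbrs {V : Type*} (G : SimpleGraph V) (x : V → Bool) (j : V) : ℕ :=
  if x j then 0 else {j' | G.Adj j j' ∧ x j' = true}.ncard

lemma expMeasure_Ioi (h : ℝ) (h0 : 0 < h) :
    expMeasure 1 (Set.Ioi h) = ENNReal.ofReal (Real.exp (-h)) := by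
  have hprob : IsProbabilityMeasure (expMeasure 1) := isProbabilityMeasure_expMeasure one_pos
  have hIic : expMeasure 1 (Set.Iic h) = ENNReal.ofReal (1 - Real.exp (-h)) := by
    rw [← ofReal_cdf]
    have h2 : cdf (expMeasure 1) h = 1 - Real.exp (-h) := by
      have h3 := cdf_expMeasure_eq one_pos h
      rw [if_pos h0.le] at h3
      simpa [one_mul] using h3
    rw [h2]
  have : (Set.Ioi h) = (Set.Iic h)ᶜ := Set.compl_Iic.symm
  rw [this, measure_compl measurableSet_Iic (measure_ne_top _ _), hIic, measure_univ]
  rw [show (1:ENNReal) = ENNReal.ofReal 1 by simp,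
    ← ENNReal.ofReal_sub _ (sub_nonneg.mpr (by rw [Real.exp_le_one_iff]; linarith))]
  norm_num

/-- **Expected one-step infection count for the SI DTS map.** If `h > 0` and the edge
timers `A(e)`, `e ∈ E(G)`, are independent exponential rate-1 random variables, then for
every state `x`, `E[‖g(x,A) - x‖₁] = ∑_j (1 - exp (-h * n(j,x)))`. -/
theorem expected_one_step_infections {Ω : Type*} [MeasureSpace Ω]
    [IsProbabilityMeasure (ℙ : Measure Ω)]
    {V : Type*} [Fintype V] (G : SimpleGraph V)
    (h : ℝ) (h0 : 0 < h)
    (A : Ω → G.edgeSet → ℝ)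
    (hAmeas : ∀ e : G.edgeSet, Measurable fun ω => A ω e)
    (hAindep : iIndepFun (fun (e : G.edgeSet) ω => A ω e) ℙ)
    (hAdist : ∀ e : G.edgeSet, Measure.map (fun ω => A ω e) ℙ = expMeasure 1)
    (x : V → Bool) :
    ∫ ω, ∑ j : V, |boolToR (siDTS G h x (A ω) j) - boolToR (x j)| ∂ℙ =
      ∑ j : V, (1 - Real.exp (-(h * (numInfNbrs G x j : ℝ)))) := by
  classical
  -- probability of all timers in a finite edge set exceeding h
  have hprodS : ∀ S : Finset G.edgeSet,
      ℙ (⋂ e ∈ S, (fun ω => A ω e) ⁻¹' Set.Ioi h)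
        = ENNReal.ofReal (Real.exp (-h)) ^ S.card := by
    intro S
    rw [hAindep.meas_biInter (S := S) (fun e _ => ⟨Set.Ioi h, measurableSet_Ioi, rfl⟩)]
    have he : ∀ e : G.edgeSet, ℙ ((fun ω => A ω e) ⁻¹' Set.Ioi h)
        = ENNReal.ofReal (Real.exp (-h)) := by
      intro e
      rw [← Measure.map_apply (hAmeas e) measurableSet_Ioi, hAdist e, expMeasure_Ioi h h0]
    simp [he, Finset.prod_const]
  -- the per-node result
  have key : ∀ j : V, (∫ ω, |boolToR (siDTS G h x (A ω) j) - boolToR (x j)| ∂ℙ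
        = 1 - Real.exp (-(h * (numInfNbrs G x j : ℝ))))
      ∧ Integrable (fun ω => |boolToR (siDTS G h x (A ω) j) - boolToR (x j)|) ℙ := by
    intro j
    by_cases hxj : x j = true
    · have hz : (fun ω => |boolToR (siDTS G h x (A ω) j) - boolToR (x j)|) = fun _ => 0 := by
        funext ω
        simp [siDTS, hxj, boolToR]
      have hn : numInfNbrs G x j = 0 := by simp [numInfNbrs, hxj]
      rw [hz, hn]
      simp [integrable_const]
    · -- susceptible node
      have hxj' : x j = false := by simpa using hxj
      -- the set of relevant edges
      set T : Finset G.edgeSet := Finset.univ.filter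
        (fun e => ∃ j', (G.Adj j j' ∧ x j' = true) ∧ (e : Sym2 V) = s(j, j')) with hT
      -- cardinality
      have hcard : T.card = numInfNbrs G x j := by
        have hn : numInfNbrs G x j = ({j' | G.Adj j j' ∧ x j' = true}).ncard := by
          simp [numInfNbrs, hxj']
        have hset : {j' | G.Adj j j' ∧ x j' = true}
            = ↑(Finset.univ.filter (fun j' => G.Adj j j' ∧ x j' = true)) := by
          ext j'; simp
        rw [hn, hset, Set.ncard_coe_finset]
        refine (Finset.card_bij
          (fun a ha => (⟨s(j, a), (SimpleGraph.mem_edgeSet G).mpr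
            ((Finset.mem_filter.mp ha).2.1)⟩ : G.edgeSet)) ?_ ?_ ?_).symm
        · intro a ha
          rw [hT, Finset.mem_filter]
          exact ⟨Finset.mem_univ _, a, (Finset.mem_filter.mp ha).2, rfl⟩
        · intro a₁ ha₁ a₂ ha₂ heq
          have : s(j, a₁) = s(j, a₂) := congrArg Subtype.val heq
          exact Sym2.congr_right.mp this
        · intro e heT
          rw [hT, Finset.mem_filter] at heT
          obtain ⟨-, j', hj', heq⟩ := heT
          exact ⟨j', Finset.mem_filter.mpr ⟨Finset.mem_univ _, hj'⟩, Subtype.ext heq.symm⟩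
      -- the event that no relevant timer fires
      set D : Set Ω := ⋂ e ∈ T, (fun ω => A ω e) ⁻¹' Set.Ioi h with hD
      have hDmeas : MeasurableSet D := by
        apply MeasurableSet.biInter (Set.to_countable _)
        exact fun e _ => (hAmeas e) measurableSet_Ioi
      -- the integrand is the indicator of Dᶜ
      have hind : (fun ω => |boolToR (siDTS G h x (A ω) j) - boolToR (x j)|)
          = Set.indicator Dᶜ (fun _ => (1:ℝ)) := by
        funext ω
        have hiff : (x j = true ∨ ∃ j', ∃ hadj : G.Adj j j', x j' = true ∧
            A ω ⟨s(j, j'), (SimpleGraph.mem_edgeSet G).mpr hadj⟩ ≤ h) ↔ ω ∈ Dᶜ := by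
          rw [Set.mem_compl_iff, hD]
          simp only [Set.mem_iInter, Set.mem_preimage, Set.mem_Ioi, not_forall, not_lt]
          constructor
          · rintro (hc | ⟨j', hadj, hinf, hle⟩)
            · exact absurd hc hxj
            · refine ⟨⟨s(j, j'), (SimpleGraph.mem_edgeSet G).mpr hadj⟩, ?_, hle⟩
              rw [hT, Finset.mem_filter]
              exact ⟨Finset.mem_univ _, j', ⟨hadj, hinf⟩, rfl⟩
          · rintro ⟨e, heT, hle⟩
            rw [hT, Finset.mem_filter] at heT
            obtain ⟨-, j', ⟨hadj, hinf⟩, heq⟩ := heT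
            refine Or.inr ⟨j', hadj, hinf, ?_⟩
            have he : e = ⟨s(j, j'), (SimpleGraph.mem_edgeSet G).mpr hadj⟩ := Subtype.ext heq
            rwa [he] at hle
        by_cases hP : (x j = true ∨ ∃ j', ∃ hadj : G.Adj j j', x j' = true ∧
            A ω ⟨s(j, j'), (SimpleGraph.mem_edgeSet G).mpr hadj⟩ ≤ h)
        · rw [Set.indicator_of_mem (hiff.mp hP)]
          have hg : siDTS G h x (A ω) j = true := by
            simp only [siDTS]; exact if_pos hP
          rw [hg, hxj']
          norm_num [boolToR]
        · rw [Set.indicator_of_notMem (fun hc => hP (hiff.mpr hc))]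
          have hg : siDTS G h x (A ω) j = false := by
            simp only [siDTS]; exact if_neg hP
          rw [hg, hxj']
          norm_num [boolToR]
      have hPD : ℙ Dᶜ = ENNReal.ofReal (1 - Real.exp (-(h * (numInfNbrs G x j : ℝ)))) := by
        have hq : ENNReal.ofReal (Real.exp (-h)) ^ T.card
            = ENNReal.ofReal (Real.exp (-(h * (numInfNbrs G x j : ℝ)))) := by
          rw [← ENNReal.ofReal_pow (Real.exp_nonneg _), ← Real.exp_nat_mul, hcard]
          congr 1
          ring
        rw [measure_compl hDmeas (measure_ne_top _ _), measure_univ, hD, hprodS T, hq,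
          show (1:ENNReal) = ENNReal.ofReal 1 by simp,
          ← ENNReal.ofReal_sub _ (Real.exp_nonneg _)]
      constructor
      · rw [hind, integral_indicator_const _ hDmeas.compl, measureReal_def, hPD, smul_eq_mul, mul_one,
          ENNReal.toReal_ofReal]
        have : Real.exp (-(h * (numInfNbrs G x j : ℝ))) ≤ 1 := by
          rw [Real.exp_le_one_iff]
          have : (0:ℝ) ≤ h * (numInfNbrs G x j : ℝ) := by positivity
          linarith
        linarith
      · rw [hind]
        exact (integrable_const (1:ℝ)).indicator hDmeas.compl
  rw [integral_finset_sum _ (fun j _ => (key j).2)]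
  exact Finset.sum_congr rfl fun j _ => (key j).1
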